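/- Let (E_t, β_{s,t})_{s,t∈ℚ_{>0}} be a rational-time subproduct system of two-dimensional Hilbert spaces, let (Ẽ_t, β̃_{s,t})_{s,t∈(0,∞)} be an algebraic product system of Hilbert spaces, and let (α_t)_{t∈ℚ_{>0}} be a representation of the former in the latter. For t ∈ (0,1) let U_t : Ẽ_1 → Ẽ_1 be the unitary determined by β̃_{t,1−t}(U_t h) = ξ̃_{1−t,t}(β̃_{1−t,t}(h)) for h ∈ Ẽ_1. Assume that for every h ∈ Ẽ_1 the function t ↦ ⟨U_t h, h⟩ on (0,1) extends to a continuous function on [0,1] taking the value ‖h‖² at t = 0 and at t = 1. Then for every h ∈ E_1 the function on ℚ ∩ [0,1] equal to ⟨β_{t,1−t}(h), ξ_{1−t,t}(β_{1−t,t}(h))⟩ for t ∈ ℚ ∩ (0,1) and equal to ‖h‖² at t ∈ {0,1} is uniformly continuous. -/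

import Mathlib

noncomputable section

open scoped TensorProduct ComplexConjugate

namespace SubprodHilbert

section TensorConstruction


variable {E F : Type*} [NormedAddCommGroup E] [InnerProductSpace ℂ E]
  [NormedAddCommGroup F] [InnerProductSpace ℂ F]

local notation "⟪" x ", " y "⟫" => @inner ℂ _ _ x y

/-- For fixed `u, v`, the ℂ-bilinear functional `(u', v') ↦ ⟪u,u'⟫ ⟪v,v'⟫`. -/
def innerAux (u : E) (v : F) : E →ₗ[ℂ] F →ₗ[ℂ] ℂ :=
  LinearMap.mk₂ ℂ (fun u' v' => ⟪u, u'⟫ * ⟪v, v'⟫)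
    (fun m₁ m₂ n => by simp [inner_add_right]; ring)
    (fun c m n => by simp [inner_smul_right]; ring)
    (fun m n₁ n₂ => by simp [inner_add_right]; ring)
    (fun c m n => by simp [inner_smul_right]; ring)

@[simp] lemma innerAux_apply (u u' : E) (v v' : F) :
    innerAux u v u' v' = ⟪u, u'⟫ * ⟪v, v'⟫ := rfl

/-- The (conjugate-linear-in-the-first-variable) map sending `z : E ⊗ F` to the linear
functional `w ↦ ⟪z, w⟫`. -/
def innerFunc : E ⊗[ℂ] F →+ (E ⊗[ℂ] F →ₗ[ℂ] ℂ) :=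
  TensorProduct.liftAddHom
    (AddMonoidHom.mk'
      (fun u => AddMonoidHom.mk' (fun v => TensorProduct.lift (innerAux u v))
        (fun v₁ v₂ => by
          apply TensorProduct.ext'
          intro u' v'
          simp [inner_add_left]
          ring))
      (fun u₁ u₂ => by
        ext v : 1
        apply TensorProduct.ext'
        intro u' v'
        simp [inner_add_left]
        ring))
    (fun c u v => by
      apply TensorProduct.ext'
      intro u' v'
      simp [inner_smul_left]
      ring)

@[simp] lemma innerFunc_tmul (u u' : E) (v v' : F) :
    innerFunc (u ⊗ₜ[ℂ] v) (u' ⊗ₜ[ℂ] v') = ⟪u, u'⟫ * ⟪v, v'⟫ := rfl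

lemma innerFunc_smul (c : ℂ) (z : E ⊗[ℂ] F) :
    innerFunc (c • z) = conj c • innerFunc z := by
  induction z using TensorProduct.induction_on with
  | zero => simp
  | tmul u v =>
      rw [TensorProduct.smul_tmul']
      apply TensorProduct.ext'
      intro u' v'
      simp [inner_smul_left]
      ring
  | add z₁ z₂ h₁ h₂ => rw [smul_add, map_add, map_add, h₁, h₂, smul_add]

lemma innerFunc_conj_symm (z w : E ⊗[ℂ] F) :
    conj (innerFunc w z) = innerFunc z w := by
  induction z using TensorProduct.induction_on with
  | zero => simp
  | tmul u v =>
      induction w using TensorProduct.induction_on with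
      | zero => simp
      | tmul u' v' =>
          simp only [innerFunc_tmul, map_mul, inner_conj_symm]
      | add w₁ w₂ h₁ h₂ => simp [map_add, h₁, h₂]
  | add z₁ z₂ h₁ h₂ => simp [map_add, h₁, h₂]

lemma exists_orthonormal_rep (z : E ⊗[ℂ] F) :
    ∃ (n : ℕ) (e : Fin n → E) (w : Fin n → F),
      Orthonormal ℂ e ∧ z = ∑ i, e i ⊗ₜ[ℂ] w i := by
  obtain ⟨S, rfl⟩ := TensorProduct.exists_finset z
  set U : Submodule ℂ E := Submodule.span ℂ (Prod.fst '' (S : Set (E × F))) with hU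
  haveI : FiniteDimensional ℂ U :=
    FiniteDimensional.span_of_finite ℂ (S.finite_toSet.image _)
  let b : OrthonormalBasis (Fin (Module.finrank ℂ U)) ℂ U := stdOrthonormalBasis ℂ U
  have hone : Orthonormal ℂ (fun i => (b i : E)) := by
    have hb := b.orthonormal
    constructor
    · intro i; simpa [norm] using hb.1 i
    · intro i j hij; simpa [Submodule.coe_inner] using hb.2 hij
  refine ⟨_, fun i => (b i : E), fun i => ∑ p ∈ S, ⟪(b i : E), p.1⟫ • p.2, hone, ?_⟩
  have key : ∀ p ∈ S, p.1 ⊗ₜ[ℂ] p.2 = ∑ i, ⟪(b i : E), p.1⟫ • ((b i : E) ⊗ₜ[ℂ] p.2) := by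
    intro p hp
    have hmem : p.1 ∈ U := Submodule.subset_span ⟨p, hp, rfl⟩
    have hrep : ((∑ i, (⟪b i, (⟨p.1, hmem⟩ : U)⟫ : ℂ) • b i : U) : E) = p.1 := by
      rw [b.sum_repr' ⟨p.1, hmem⟩]
    have h2 : ∀ i, (⟪b i, (⟨p.1, hmem⟩ : U)⟫ : ℂ) = ⟪(b i : E), p.1⟫ := fun i =>
      Submodule.coe_inner U (b i) ⟨p.1, hmem⟩
    have hrep' : p.1 = ∑ i, ⟪(b i : E), p.1⟫ • (b i : E) := by
      calc p.1 = ((∑ i, (⟪b i, (⟨p.1, hmem⟩ : U)⟫ : ℂ) • b i : U) : E) := hrep.symm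
        _ = ∑ i, (⟪b i, (⟨p.1, hmem⟩ : U)⟫ : ℂ) • (b i : E) := by push_cast; rfl
        _ = ∑ i, ⟪(b i : E), p.1⟫ • (b i : E) := Finset.sum_congr rfl fun i _ => by rw [h2]
    calc p.1 ⊗ₜ[ℂ] p.2 = (∑ i, ⟪(b i : E), p.1⟫ • (b i : E)) ⊗ₜ[ℂ] p.2 := by rw [← hrep']
      _ = ∑ i, ⟪(b i : E), p.1⟫ • ((b i : E) ⊗ₜ[ℂ] p.2) := by
          rw [TensorProduct.sum_tmul]
          refine Finset.sum_congr rfl fun i _ => ?_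
          rw [TensorProduct.smul_tmul']
  calc ∑ p ∈ S, p.1 ⊗ₜ[ℂ] p.2
      = ∑ p ∈ S, ∑ i, ⟪(b i : E), p.1⟫ • ((b i : E) ⊗ₜ[ℂ] p.2) :=
        Finset.sum_congr rfl key
    _ = ∑ i, ∑ p ∈ S, ⟪(b i : E), p.1⟫ • ((b i : E) ⊗ₜ[ℂ] p.2) := Finset.sum_comm
    _ = ∑ i, (b i : E) ⊗ₜ[ℂ] (∑ p ∈ S, ⟪(b i : E), p.1⟫ • p.2) := by
        refine Finset.sum_congr rfl fun i _ => ?_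
        rw [TensorProduct.tmul_sum]
        refine Finset.sum_congr rfl fun p _ => ?_
        rw [TensorProduct.tmul_smul]

lemma innerFunc_self (n : ℕ) (e : Fin n → E) (w : Fin n → F) (he : Orthonormal ℂ e) :
    innerFunc (∑ i, e i ⊗ₜ[ℂ] w i) (∑ i, e i ⊗ₜ[ℂ] w i) = ∑ i, ⟪w i, w i⟫ := by
  have hee : ∀ i j, (⟪e i, e j⟫ : ℂ) = if i = j then 1 else 0 := orthonormal_iff_ite.mp he
  simp only [map_sum, LinearMap.coe_sum, Finset.sum_apply, innerFunc_tmul, hee, ite_mul,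
    one_mul, zero_mul]
  rw [Finset.sum_comm]
  simp

/-- The inner-product-space core on the algebraic tensor product of two complex
inner product spaces, determined by `⟪u ⊗ v, u' ⊗ v'⟫ = ⟪u,u'⟫ ⟪v,v'⟫`. -/
def tensorCore : InnerProductSpace.Core ℂ (E ⊗[ℂ] F) where
  inner z w := innerFunc z w
  conj_inner_symm := innerFunc_conj_symm
  re_inner_nonneg z := by
    show 0 ≤ RCLike.re (innerFunc z z)
    obtain ⟨n, e, w, he, rfl⟩ := exists_orthonormal_rep z
    rw [innerFunc_self n e w he]
    rw [map_sum]
    exact Finset.sum_nonneg fun i _ => inner_self_nonneg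
  add_left z₁ z₂ w := by
    show innerFunc (z₁ + z₂) w = innerFunc z₁ w + innerFunc z₂ w
    rw [map_add]; rfl
  smul_left z w c := by
    show innerFunc (c • z) w = conj c * innerFunc z w
    rw [innerFunc_smul]; rfl
  definite z hz := by
    replace hz : innerFunc z z = 0 := hz
    obtain ⟨n, e, w, he, rfl⟩ := exists_orthonormal_rep z
    rw [innerFunc_self n e w he] at hz
    have hz' : ∑ i, (‖w i‖ ^ 2 : ℝ) = 0 := by
      have := congrArg Complex.re hz
      simpa [← @inner_self_eq_norm_sq ℂ] using this
    have hw : ∀ i ∈ Finset.univ, w i = 0 := by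
      intro i hi
      have h0 : (‖w i‖ ^ 2 : ℝ) = 0 :=
        (Finset.sum_eq_zero_iff_of_nonneg fun j _ => sq_nonneg _).mp hz' i hi
      simpa using h0
    calc ∑ i, e i ⊗ₜ[ℂ] w i = ∑ i : Fin n, (0 : E ⊗[ℂ] F) :=
          Finset.sum_congr rfl fun i hi => by rw [hw i hi, TensorProduct.tmul_zero]
      _ = 0 := Finset.sum_const_zero

instance tensorNormedAddCommGroup : NormedAddCommGroup (E ⊗[ℂ] F) :=
  @InnerProductSpace.Core.toNormedAddCommGroup ℂ _ _ _ _ tensorCore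

instance tensorInnerProductSpace : InnerProductSpace ℂ (E ⊗[ℂ] F) :=
  InnerProductSpace.ofCore tensorCore.toCore

@[simp] lemma inner_tmul (u u' : E) (v v' : F) :
    (inner ℂ (u ⊗ₜ[ℂ] v) (u' ⊗ₜ[ℂ] v') : ℂ) = ⟪u, u'⟫ * ⟪v, v'⟫ := rfl
end TensorConstruction


/-- Cast between the fibers of a family of inner product spaces along an equality of
indices, as a linear isometric isomorphism. -/
def castE {ι : Type*} (E : ι → Type*) [∀ t, NormedAddCommGroup (E t)]
    [∀ t, InnerProductSpace ℂ (E t)] {a b : ι} (h : a = b) : E a ≃ₗᵢ[ℂ] E b := by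
  subst h; exact LinearIsometryEquiv.refl ℂ (E a)


/-- The positive rationals, the time domain of a rational-time subproduct system. -/
abbrev Qpos : Type := {q : ℚ // 0 < q}

section Rational

variable (E : Qpos → Type*)
  [∀ t, NormedAddCommGroup (E t)] [∀ t, InnerProductSpace ℂ (E t)]
variable (β : ∀ s t : Qpos, E (s + t) →ₗᵢ[ℂ] (E s ⊗[ℂ] E t))

/-- The associativity condition in the definition of a rational-time subproduct system. -/
def SubprodAssocQ : Prop :=
  ∀ r s t : Qpos, ∀ u : E (r + s + t),
    (TensorProduct.assoc ℂ (E r) (E s) (E t))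
      (TensorProduct.map (β r s).toLinearMap LinearMap.id (β (r + s) t u))
    = TensorProduct.map LinearMap.id (β s t).toLinearMap
        (β r (s + t) (castE E (add_assoc r s t) u))

/-- Condition (1) of Theorem 3.1, with the parameter `a` explicit:
`(x, y)` behaves like two exponential units at angle `aᵗ`. -/
def Cond1With (a : ℝ) (x y : ∀ t : Qpos, E t) : Prop :=
  (∀ t, ‖x t‖ = 1) ∧ (∀ t, ‖y t‖ = 1) ∧
  (∀ t : Qpos, (inner ℂ (x t) (y t) : ℂ) = ((a ^ ((t : ℚ) : ℝ) : ℝ) : ℂ)) ∧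
  (∀ s t : Qpos, β s t (x (s + t)) = x s ⊗ₜ[ℂ] x t) ∧
  (∀ s t : Qpos, β s t (y (s + t)) = y s ⊗ₜ[ℂ] y t)

/-- Condition (1) of Theorem 3.1: `∃ a ∈ [0,1)` as in `Cond1With`. -/
def Cond1 (x y : ∀ t : Qpos, E t) : Prop :=
  ∃ a : ℝ, 0 ≤ a ∧ a < 1 ∧ Cond1With E β a x y

/-- Condition (3) of Theorem 3.1, with the parameter `c` and the multiplicative
unimodular family `η` explicit. -/
def Cond3With (c : ℝ) (η : Qpos → ℂ) (x y : ∀ t : Qpos, E t) : Prop :=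
  (∀ t, ‖η t‖ = 1) ∧ (∀ s t : Qpos, η (s + t) = η s * η t) ∧
  (∀ t, ‖x t‖ = 1) ∧ (∀ t : Qpos, (inner ℂ (x t) (y t) : ℂ) = 0) ∧
  (∀ t : Qpos, ‖y t‖ ^ 2 =
    if c = 1 then ((t : ℚ) : ℝ) else (c ^ (2 * ((t : ℚ) : ℝ)) - 1) / (c ^ 2 - 1)) ∧
  (∀ s t : Qpos, β s t (x (s + t)) = x s ⊗ₜ[ℂ] x t) ∧
  (∀ s t : Qpos, β s t (y (s + t)) =
    y s ⊗ₜ[ℂ] x t + (((c ^ ((s : ℚ) : ℝ) : ℝ) : ℂ) * η s) • (x s ⊗ₜ[ℂ] y t))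

/-- Condition (3) of Theorem 3.1. -/
def Cond3 (x y : ∀ t : Qpos, E t) : Prop :=
  ∃ c : ℝ, 0 < c ∧ ∃ η : Qpos → ℂ, Cond3With E β c η x y

/-- Condition (4) of Theorem 3.1. -/
def Cond4 (x y : ∀ t : Qpos, E t) : Prop :=
  (∀ t, ‖x t‖ = 1) ∧ (∀ t, ‖y t‖ = 1) ∧
  (∀ t : Qpos, (inner ℂ (x t) (y t) : ℂ) = 0) ∧
  (∀ s t : Qpos, β s t (x (s + t)) = x s ⊗ₜ[ℂ] x t) ∧
  (∀ s t : Qpos, β s t (y (s + t)) = y s ⊗ₜ[ℂ] x t)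

/-- Condition (5) of Theorem 3.1. -/
def Cond5 (x y : ∀ t : Qpos, E t) : Prop :=
  (∀ t, ‖x t‖ = 1) ∧ (∀ t, ‖y t‖ = 1) ∧
  (∀ t : Qpos, (inner ℂ (x t) (y t) : ℂ) = 0) ∧
  (∀ s t : Qpos, β s t (x (s + t)) = x s ⊗ₜ[ℂ] x t) ∧
  (∀ s t : Qpos, β s t (y (s + t)) = x s ⊗ₜ[ℂ] y t)

/-- The function `t ↦ ⟨β_{t,1-t} h, ξ_{1-t,t} β_{1-t,t} h⟩` on `ℚ ∩ (0,1)` (written here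
with the two arguments of the inner product exchanged, to match the convention of Mathlib's
`inner`, which is conjugate-linear in its first argument), extended by `‖h‖²` elsewhere. -/
def flipInnerFn (h : E 1) : ℚ → ℂ := fun t =>
  if ht : 0 < t ∧ t < 1 then
    (inner ℂ
      ((TensorProduct.comm ℂ (E ⟨1 - t, by linarith [ht.2]⟩) (E ⟨t, ht.1⟩))
        (β ⟨1 - t, by linarith [ht.2]⟩ ⟨t, ht.1⟩
          (castE E (by apply Subtype.ext; simp) h)))
      (β ⟨t, ht.1⟩ ⟨1 - t, by linarith [ht.2]⟩
        (castE E (by apply Subtype.ext; simp) h)) : ℂ)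
  else ((‖h‖ : ℂ)) ^ 2

end Rational


/-- The positive reals, the time domain of a product system. -/
abbrev Rpos : Type := {x : ℝ // 0 < x}

/-- The embedding of the positive rationals into the positive reals. -/
def QtoR : Qpos → Rpos := fun q => ⟨((q : ℚ) : ℝ), by exact_mod_cast q.2⟩

lemma QtoR_add (s t : Qpos) : QtoR s + QtoR t = QtoR (s + t) := by
  apply Subtype.ext; simp [QtoR]

section ProdSys

variable (G : Rpos → Type*)
  [∀ t, NormedAddCommGroup (G t)] [∀ t, InnerProductSpace ℂ (G t)]
variable (M : ∀ s t : Rpos, (G s ⊗[ℂ] G t) →ₗᵢ[ℂ] G (s + t))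

/-- Associativity of the multiplication of an (algebraic) product system, expressed on
elementary tensors (by density this pins down the usual associativity diagram). -/
def ProdAssoc : Prop :=
  ∀ r s t : Rpos, ∀ (a : G r) (b : G s) (c : G t),
    M (r + s) t ((M r s (a ⊗ₜ[ℂ] b)) ⊗ₜ[ℂ] c)
      = castE G (add_assoc r s t).symm (M r (s + t) (a ⊗ₜ[ℂ] (M s t (b ⊗ₜ[ℂ] c))))

end ProdSys


section AuxLemmas

variable {ι : Type*} (H : ι → Type*) [∀ t, NormedAddCommGroup (H t)]
  [∀ t, InnerProductSpace ℂ (H t)]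

@[simp] lemma castE_rfl_apply {a : ι} (u : H a) : castE H (rfl : a = a) u = u := rfl

lemma castE_trans {a b c : ι} (e1 : a = b) (e2 : b = c) (u : H a) :
    castE H e2 (castE H e1 u) = castE H (e1.trans e2) u := by
  subst e1; subst e2; rfl

lemma castE_symm_apply {a b : ι} (e : a = b) (u : H a) :
    castE H e.symm (castE H e u) = u := by subst e; rfl

lemma castE_inner {a b : ι} (e : a = b) (u v : H a) :
    (inner ℂ (castE H e u) (castE H e v) : ℂ) = inner ℂ u v :=
  (castE H e).inner_map_map u v

lemma inner_castE_swap {a b : ι} (e : a = b) (x : H a) (y : H b) :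
    (inner ℂ y (castE H e x) : ℂ) = conj (inner ℂ x (castE H e.symm y) : ℂ) := by
  subst e
  simp only [castE_rfl_apply]
  exact (inner_conj_symm (𝕜 := ℂ) y x).symm

lemma castE_norm {a b : ι} (e : a = b) (u : H a) : ‖castE H e u‖ = ‖u‖ :=
  (castE H e).norm_map u

variable {E E' F F' : Type*} [NormedAddCommGroup E] [InnerProductSpace ℂ E]
  [NormedAddCommGroup E'] [InnerProductSpace ℂ E']
  [NormedAddCommGroup F] [InnerProductSpace ℂ F]
  [NormedAddCommGroup F'] [InnerProductSpace ℂ F']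

lemma tensor_map_inner (f : E →ₗᵢ[ℂ] E') (g : F →ₗᵢ[ℂ] F') (z w : E ⊗[ℂ] F) :
    (inner ℂ (TensorProduct.map f.toLinearMap g.toLinearMap z)
      (TensorProduct.map f.toLinearMap g.toLinearMap w) : ℂ) = inner ℂ z w := by
  exact TensorProduct.inner_map_map f g z w

lemma inner_tensor_eq (z w : E ⊗[ℂ] F) :
    @inner ℂ _ (tensorInnerProductSpace (E := E) (F := F)).toInner z w = inner ℂ z w := by
  show innerFunc z w = _
  induction z using TensorProduct.induction_on with
  | zero => simp [TensorProduct.inner_def]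
  | tmul u v =>
    induction w using TensorProduct.induction_on with
    | zero => simp [TensorProduct.inner_def]
    | tmul u' v' => exact (innerFunc_tmul u u' v v').trans (TensorProduct.inner_tmul ℂ u u' v v').symm
    | add w1 w2 h1 h2 => simp_all [TensorProduct.inner_def]
  | add z1 z2 h1 h2 => simp_all [TensorProduct.inner_def]

lemma comm_map (f : E →ₗ[ℂ] E') (g : F →ₗ[ℂ] F') (z : E ⊗[ℂ] F) :
    TensorProduct.comm ℂ E' F' (TensorProduct.map f g z)
      = TensorProduct.map g f (TensorProduct.comm ℂ E F z) := by
  induction z using TensorProduct.induction_on with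
  | zero => simp
  | tmul u v => simp
  | add z1 z2 h1 h2 => simp only [map_add, h1, h2]

end AuxLemmas

set_option maxHeartbeats 1000000 in
/-- **Proposition 4.2.** If a rational-time subproduct system is represented in an
(algebraic) product system whose "flip" unitaries `U_t` have continuous matrix
coefficients (Liebscher's theorem provides this for Arveson systems), then for every
`h ∈ E₁` the function `t ↦ ⟨β_{t,1-t} h, ξ_{1-t,t} β_{1-t,t} h⟩` (with value `‖h‖²` at the
endpoints) is uniformly continuous on `ℚ ∩ [0,1]`. -/
theorem statement18
    (E : Qpos → Type*) [∀ t, NormedAddCommGroup (E t)] [∀ t, InnerProductSpace ℂ (E t)]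
    (hdim : ∀ t, Module.finrank ℂ (E t) = 2)
    (β : ∀ s t : Qpos, E (s + t) →ₗᵢ[ℂ] (E s ⊗[ℂ] E t))
    (hassoc : SubprodAssocQ E β)
    (G : Rpos → Type*) [∀ t, NormedAddCommGroup (G t)] [∀ t, InnerProductSpace ℂ (G t)]
    [∀ t, CompleteSpace (G t)]
    (M : ∀ s t : Rpos, (G s ⊗[ℂ] G t) →ₗᵢ[ℂ] G (s + t))
    (hdense : ∀ s t : Rpos, DenseRange (M s t))
    (hMassoc : ProdAssoc G M)
    (α : ∀ t : Qpos, E t →ₗᵢ[ℂ] G (QtoR t))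
    (hrep : ∀ s t : Qpos, ∀ u : E (s + t),
      α (s + t) u = castE G (QtoR_add s t)
        (M (QtoR s) (QtoR t)
          (TensorProduct.map (α s).toLinearMap (α t).toLinearMap (β s t u))))
    (U : ∀ t : ℝ, 0 < t → t < 1 → (G 1 ≃ₗᵢ[ℂ] G 1))
    (hU : ∀ (t : ℝ) (h0 : 0 < t) (h1 : t < 1)
        (z : G ⟨1 - t, by linarith⟩ ⊗[ℂ] G ⟨t, h0⟩),
      U t h0 h1
          (castE G (by apply Subtype.ext; simp) (M ⟨1 - t, by linarith⟩ ⟨t, h0⟩ z))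
        = castE G (by apply Subtype.ext; simp)
            (M ⟨t, h0⟩ ⟨1 - t, by linarith⟩
              ((TensorProduct.comm ℂ (G ⟨1 - t, by linarith⟩) (G ⟨t, h0⟩)) z)))
    (hcont : ∀ h : G 1, ∃ g : ℝ → ℂ, ContinuousOn g (Set.Icc (0 : ℝ) 1) ∧
      g 0 = ((‖h‖ : ℂ)) ^ 2 ∧ g 1 = ((‖h‖ : ℂ)) ^ 2 ∧
      ∀ (t : ℝ) (h0 : 0 < t) (h1 : t < 1), g t = (inner ℂ h (U t h0 h1 h) : ℂ)) :
    ∀ h : E 1, UniformContinuousOn (flipInnerFn E β h) (Set.Icc (0 : ℚ) 1) := by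
  intro h
  have ht1 : QtoR 1 = (1 : Rpos) := Subtype.ext (by norm_num [QtoR])
  obtain ⟨g, hgcont, hg0, hg1, hgU⟩ := hcont (castE G ht1 (α 1 h))
  have hnorm : ‖castE G ht1 (α 1 h)‖ = ‖h‖ := by
    rw [castE_norm, (α 1).norm_map]
  -- transport lemmas
  have α_cast : ∀ (a b : Qpos) (e : a = b) (u : E a),
      α b (castE E e u) = castE G (congrArg QtoR e) (α a u) := by
    intro a b e u; subst e; rfl
  have M_cast : ∀ (a b a' b' : Rpos) (ea : a = a') (eb : b = b')
      (e : ((a, b) : Rpos × Rpos) = (a', b')) (zz : G a ⊗[ℂ] G b),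
      M a' b' (castE (fun p : Rpos × Rpos => G p.1 ⊗[ℂ] G p.2) e zz)
        = castE G (by rw [ea, eb]) (M a b zz) := by
    intro a b a' b' ea eb e zz; subst ea; subst eb; rfl
  have comm_cast : ∀ (a b a' b' : Rpos) (ea : a = a') (eb : b = b')
      (e : ((a, b) : Rpos × Rpos) = (a', b'))
      (e' : ((b, a) : Rpos × Rpos) = (b', a')) (zz : G a ⊗[ℂ] G b),
      TensorProduct.comm ℂ (G a') (G b')
          (castE (fun p : Rpos × Rpos => G p.1 ⊗[ℂ] G p.2) e zz)
        = castE (fun p : Rpos × Rpos => G p.1 ⊗[ℂ] G p.2) e'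
            (TensorProduct.comm ℂ (G a) (G b) zz) := by
    intro a b a' b' ea eb e e' zz; subst ea; subst eb; rfl
  -- pointwise identification of `flipInnerFn` with `conj ∘ g`
  have key : ∀ q : ℚ, q ∈ Set.Icc (0 : ℚ) 1 →
      flipInnerFn E β h q = conj (g (q : ℝ)) := by
    intro q hq
    rcases eq_or_lt_of_le hq.1 with h0q | h0q
    · -- q = 0
      have hq0 : ((q : ℝ)) = 0 := by rw [← h0q]; norm_num
      simp only [flipInnerFn]
      rw [dif_neg (by rw [← h0q]; simp), hq0, hg0, hnorm, map_pow, Complex.conj_ofReal]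
    · rcases eq_or_lt_of_le hq.2 with h1q | h1q
      · -- q = 1
        have hq1 : ((q : ℝ)) = 1 := by rw [h1q]; norm_num
        simp only [flipInnerFn]
        rw [dif_neg (by rw [h1q]; simp), hq1, hg1, hnorm, map_pow, Complex.conj_ofReal]
      · -- interior
        have h0 : (0 : ℝ) < (q : ℝ) := by exact_mod_cast h0q
        have h1 : ((q : ℝ)) < 1 := by exact_mod_cast h1q
        set s : Qpos := ⟨1 - q, by linarith⟩ with hsdef
        set τ : Qpos := ⟨q, h0q⟩ with hτdef
        have es : (1 : Qpos) = s + τ := Subtype.ext (by show (1 : ℚ) = 1 - q + q; ring)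
        have eτ : (1 : Qpos) = τ + s := Subtype.ext (by show (1 : ℚ) = q + (1 - q); ring)
        have e1 : QtoR s + QtoR τ = (1 : Rpos) := by rw [QtoR_add, ← es, ht1]
        have e2 : QtoR τ + QtoR s = (1 : Rpos) := by rw [QtoR_add, ← eτ, ht1]
        have e3 : QtoR s + QtoR τ = QtoR τ + QtoR s := e1.trans e2.symm
        set A := β τ s (castE E eτ h) with hA
        set B0 := β s τ (castE E es h) with hB0
        set z := TensorProduct.map (α s).toLinearMap (α τ).toLinearMap B0 with hzdef
        set w := TensorProduct.map (α τ).toLinearMap (α s).toLinearMap A with hwdef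
        have hps : QtoR s = (⟨1 - (q : ℝ), by linarith⟩ : Rpos) := by
          apply Subtype.ext; show ((1 - q : ℚ) : ℝ) = 1 - (q : ℝ); push_cast; ring
        have hpτ : QtoR τ = (⟨(q : ℝ), h0⟩ : Rpos) := by
          apply Subtype.ext; rfl
        have hp : ((QtoR s, QtoR τ) : Rpos × Rpos)
            = (⟨1 - (q : ℝ), by linarith⟩, ⟨(q : ℝ), h0⟩) := by rw [hps, hpτ]
        have hp' : ((QtoR τ, QtoR s) : Rpos × Rpos)
            = (⟨(q : ℝ), h0⟩, ⟨1 - (q : ℝ), by linarith⟩) := by rw [hps, hpτ]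
        -- the image of h in G 1 as a product
        have hh1 : castE G ht1 (α 1 h) = castE G e1 (M (QtoR s) (QtoR τ) z) := by
          have t1 := hrep s τ (castE E es h)
          rw [α_cast 1 (s + τ) es h] at t1
          have t3 := congrArg (castE G ((congrArg QtoR es).symm.trans ht1)) t1
          rw [castE_trans, castE_trans] at t3
          exact t3
        -- the action of U on it
        have hu : U (q : ℝ) h0 h1 (castE G ht1 (α 1 h))
            = castE G e2 (M (QtoR τ) (QtoR s)
                (TensorProduct.comm ℂ (G (QtoR s)) (G (QtoR τ)) z)) := by
          have t1 := hU (q : ℝ) h0 h1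
            (castE (fun p : Rpos × Rpos => G p.1 ⊗[ℂ] G p.2) hp z)
          rw [M_cast (QtoR s) (QtoR τ) ⟨1 - (q : ℝ), by linarith⟩ ⟨(q : ℝ), h0⟩
              hps hpτ hp z] at t1
          rw [comm_cast (QtoR s) (QtoR τ) ⟨1 - (q : ℝ), by linarith⟩ ⟨(q : ℝ), h0⟩
              hps hpτ hp hp' z] at t1
          rw [M_cast (QtoR τ) (QtoR s) ⟨(q : ℝ), h0⟩ ⟨1 - (q : ℝ), by linarith⟩
              hpτ hps hp' _] at t1
          rw [castE_trans, castE_trans] at t1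
          rw [hh1]
          exact t1
        -- the other product expression
        have hwM : M (QtoR τ) (QtoR s) w = castE G e3 (M (QtoR s) (QtoR τ) z) := by
          have t1 := hrep τ s (castE E eτ h)
          rw [α_cast 1 (τ + s) eτ h] at t1
          have t2 := congrArg (castE G (QtoR_add τ s).symm) t1
          rw [castE_trans, castE_symm_apply] at t2
          have t3 : M (QtoR τ) (QtoR s) w
              = castE G e2.symm (castE G ht1 (α 1 h)) := by
            rw [← t2, castE_trans]
          rw [hh1, castE_trans] at t3
          exact t3
        -- assembling the inner products
        have c1 : (inner ℂ (TensorProduct.comm ℂ (E s) (E τ) B0) A : ℂ)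
            = inner ℂ (TensorProduct.comm ℂ (G (QtoR s)) (G (QtoR τ)) z) w := by
          rw [← tensor_map_inner (α τ) (α s) (TensorProduct.comm ℂ (E s) (E τ) B0) A,
            ← comm_map (α s).toLinearMap (α τ).toLinearMap B0]
        have c2 : (inner ℂ (TensorProduct.comm ℂ (G (QtoR s)) (G (QtoR τ)) z) w : ℂ)
            = inner ℂ (M (QtoR τ) (QtoR s)
                (TensorProduct.comm ℂ (G (QtoR s)) (G (QtoR τ)) z))
                (M (QtoR τ) (QtoR s) w) := by
          rw [← inner_tensor_eq]
          letI := tensorInnerProductSpace (E := G (QtoR τ)) (F := G (QtoR s))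
          exact ((M (QtoR τ) (QtoR s)).inner_map_map _ _).symm
        have c5 : (inner ℂ (castE G ht1 (α 1 h))
              (U (q : ℝ) h0 h1 (castE G ht1 (α 1 h))) : ℂ)
            = inner ℂ (M (QtoR s) (QtoR τ) z)
                (castE G e3.symm (M (QtoR τ) (QtoR s)
                  (TensorProduct.comm ℂ (G (QtoR s)) (G (QtoR τ)) z))) := by
          rw [hu, hh1,
            ← castE_trans G e3.symm e1 (M (QtoR τ) (QtoR s)
              (TensorProduct.comm ℂ (G (QtoR s)) (G (QtoR τ)) z)),
            castE_inner]
        have hfinal : (inner ℂ (TensorProduct.comm ℂ (E s) (E τ) B0) A : ℂ)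
            = conj (inner ℂ (castE G ht1 (α 1 h))
                (U (q : ℝ) h0 h1 (castE G ht1 (α 1 h))) : ℂ) := by
          rw [c1, c2, hwM, inner_castE_swap G e3, c5]
        simp only [flipInnerFn]
        rw [dif_pos ⟨h0q, h1q⟩, hgU (q : ℝ) h0 h1]
        exact hfinal
  -- uniform continuity
  have hgUC : UniformContinuousOn g (Set.Icc (0 : ℝ) 1) :=
    isCompact_Icc.uniformContinuousOn_of_continuous hgcont
  have hcastUC : UniformContinuous (fun q : ℚ => (q : ℝ)) :=
    (Isometry.of_dist_eq fun a b => Rat.dist_cast a b).uniformContinuous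
  have hconj : UniformContinuous (conj : ℂ → ℂ) :=
    Complex.isometry_conj.uniformContinuous
  have step : Filter.Tendsto (fun p : ℚ × ℚ => ((p.1 : ℝ), (p.2 : ℝ)))
      (uniformity ℚ ⊓ Filter.principal (Set.Icc (0 : ℚ) 1 ×ˢ Set.Icc (0 : ℚ) 1))
      (uniformity ℝ ⊓ Filter.principal (Set.Icc (0 : ℝ) 1 ×ˢ Set.Icc (0 : ℝ) 1)) := by
    refine Filter.tendsto_inf.2 ⟨hcastUC.mono_left inf_le_left, ?_⟩
    refine Filter.Tendsto.mono_left ?_ inf_le_right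
    refine Filter.tendsto_principal_principal.2 ?_
    intro p hp
    simp only [Set.mem_prod, Set.mem_Icc] at hp ⊢
    exact ⟨⟨by exact_mod_cast hp.1.1, by exact_mod_cast hp.1.2⟩,
      ⟨by exact_mod_cast hp.2.1, by exact_mod_cast hp.2.2⟩⟩
  have hFtend : Filter.Tendsto
      (fun p : ℚ × ℚ => (conj (g (p.1 : ℝ)), conj (g (p.2 : ℝ))))
      (uniformity ℚ ⊓ Filter.principal (Set.Icc (0 : ℚ) 1 ×ˢ Set.Icc (0 : ℚ) 1))
      (uniformity ℂ) :=
    Filter.Tendsto.comp hconj (Filter.Tendsto.comp hgUC step)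
  have hev : (fun p : ℚ × ℚ => (conj (g (p.1 : ℝ)), conj (g (p.2 : ℝ))))
      =ᶠ[uniformity ℚ ⊓ Filter.principal (Set.Icc (0 : ℚ) 1 ×ˢ Set.Icc (0 : ℚ) 1)]
      (fun p : ℚ × ℚ => (flipInnerFn E β h p.1, flipInnerFn E β h p.2)) := by
    have hmem : Set.Icc (0 : ℚ) 1 ×ˢ Set.Icc (0 : ℚ) 1 ∈
        uniformity ℚ ⊓ Filter.principal (Set.Icc (0 : ℚ) 1 ×ˢ Set.Icc (0 : ℚ) 1) :=
      Filter.mem_inf_of_right (Filter.mem_principal_self _)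
    filter_upwards [hmem] with p hp
    rw [key p.1 hp.1, key p.2 hp.2]
  exact Filter.Tendsto.congr' hev hFtend


end SubprodHilbert
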